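/- Let a ≥ 3 and n ≥ 1. The maximum degree of the metallic cube Π^a_n is 2n, and the number of vertices of Π^a_n of degree 2n equals (a−2)^n; these are exactly the strings all of whose letters lie strictly between 0 and a−1. -/

import Mathlib

/-- Strings of length `n` over the alphabet `{0,1,…,a}` in which the letter `a`
occurs only immediately after a `0` (i.e. `a` appears only inside blocks `0a`). -/
def MetallicOK (a n : ℕ) (α : Fin n → Fin (a + 1)) : Prop :=
  ∀ i : Fin n, (α i : ℕ) = a →
    ∃ j : Fin n, (j : ℕ) + 1 = (i : ℕ) ∧ (α j : ℕ) = 0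

instance (a n : ℕ) : DecidablePred (MetallicOK a n) := fun α => by
  unfold MetallicOK; infer_instance

/-- Vertices of the metallic cube `Π^a_n`. -/
abbrev MetallicVertex (a n : ℕ) : Type :=
  {α : Fin n → Fin (a + 1) // MetallicOK a n α}

/-- The metallic cube `Π^a_n`: two strings are adjacent iff `Σ_i |α_i - β_i| = 1`. -/
def metallicCube (a n : ℕ) : SimpleGraph (MetallicVertex a n) where
  Adj u v := (∑ i : Fin n, Nat.dist (u.1 i : ℕ) (v.1 i : ℕ)) = 1
  symm := by
    constructor
    intro u v h
    simpa [Nat.dist_comm] using h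
  loopless := by
    constructor
    intro u h
    simp [Nat.dist_self] at h

instance (a n : ℕ) : DecidableRel (metallicCube a n).Adj := fun u v =>
  inferInstanceAs (Decidable ((∑ i : Fin n, Nat.dist (u.1 i : ℕ) (v.1 i : ℕ)) = 1))

namespace MetallicAux

variable {a n : ℕ}

/-- Witness data: `β` differs from `v` only at coordinate `p.1`, going up (`p.2 = true`)
or down (`p.2 = false`) by one. -/
def Wit (v β : MetallicVertex a n) (p : Fin n × Bool) : Prop :=
  (∀ j, j ≠ p.1 → β.1 j = v.1 j) ∧
  ((p.2 = true ∧ (β.1 p.1 : ℕ) = (v.1 p.1 : ℕ) + 1) ∨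
   (p.2 = false ∧ (β.1 p.1 : ℕ) + 1 = (v.1 p.1 : ℕ)))

lemma sum_eq_one {f : Fin n → ℕ} (h : ∑ i, f i = 1) :
    ∃ i, f i = 1 ∧ ∀ j, j ≠ i → f j = 0 := by
  have hne : ∃ i, f i ≠ 0 := by
    by_contra hc
    push_neg at hc
    rw [Finset.sum_eq_zero (fun i _ => hc i)] at h
    exact one_ne_zero h.symm
  obtain ⟨i, hi⟩ := hne
  have hsplit := Finset.add_sum_erase Finset.univ f (Finset.mem_univ i)
  rw [h] at hsplit
  have h1 : f i = 1 := by omega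
  have h2 : ∑ j ∈ Finset.univ.erase i, f j = 0 := by omega
  refine ⟨i, h1, fun j hj => ?_⟩
  exact (Finset.sum_eq_zero_iff.mp h2) j (Finset.mem_erase.mpr ⟨hj, Finset.mem_univ j⟩)

lemma wit_exists {v β : MetallicVertex a n} (h : (metallicCube a n).Adj v β) :
    ∃ p, Wit v β p := by
  obtain ⟨i, hi1, hi0⟩ := sum_eq_one h
  have hcase : ((β.1 i : ℕ) = (v.1 i : ℕ) + 1) ∨ ((β.1 i : ℕ) + 1 = (v.1 i : ℕ)) := by
    simp [Nat.dist] at hi1; omega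
  have heq : ∀ j, j ≠ i → β.1 j = v.1 j := by
    intro j hj
    have := hi0 j hj
    simp [Nat.dist] at this
    exact Fin.ext (by omega)
  rcases hcase with hc | hc
  · exact ⟨(i, true), heq, Or.inl ⟨rfl, hc⟩⟩
  · exact ⟨(i, false), heq, Or.inr ⟨rfl, hc⟩⟩

lemma wit_unique {v β : MetallicVertex a n} {p q : Fin n × Bool}
    (hp : Wit v β p) (hq : Wit v β q) : p = q := by
  obtain ⟨hp1, hp2⟩ := hp
  obtain ⟨hq1, hq2⟩ := hq
  have hne : (β.1 p.1 : ℕ) ≠ (v.1 p.1 : ℕ) := by rcases hp2 with ⟨_, h⟩ | ⟨_, h⟩ <;> omega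
  have hij : p.1 = q.1 := by
    by_contra hc
    exact hne (congrArg Fin.val (hq1 p.1 hc))
  have hb : p.2 = q.2 := by
    rw [hij] at hp2
    rcases hp2 with ⟨h1, h2⟩ | ⟨h1, h2⟩ <;> rcases hq2 with ⟨h3, h4⟩ | ⟨h3, h4⟩
    · rw [h1, h3]
    · exfalso; omega
    · exfalso; omega
    · rw [h1, h3]
  exact Prod.ext hij hb

lemma wit_eq {v β β' : MetallicVertex a n} {p : Fin n × Bool}
    (hp : Wit v β p) (hp' : Wit v β' p) : β = β' := by
  apply Subtype.ext
  funext j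
  by_cases hj : j = p.1
  · subst hj
    apply Fin.ext
    rcases hp.2 with ⟨hb, h⟩ | ⟨hb, h⟩ <;> rcases hp'.2 with ⟨hb', h'⟩ | ⟨hb', h'⟩ <;>
      simp [hb] at hb' ⊢ <;> omega
  · rw [hp.1 j hj, hp'.1 j hj]

lemma card_le_gen (hn : 1 ≤ n) (v : MetallicVertex a n) (T : Finset (Fin n × Bool))
    (hT : ∀ β p, (metallicCube a n).Adj v β → Wit v β p → p ∈ T) :
    (metallicCube a n).degree v ≤ T.card := by
  classical
  rw [← SimpleGraph.card_neighborFinset_eq_degree]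
  apply Finset.card_le_card_of_injOn
    (fun β => if h : ∃ p, Wit v β p then h.choose else (⟨0, hn⟩, true))
  · intro β hβ
    rw [Finset.mem_coe, SimpleGraph.mem_neighborFinset] at hβ
    have hex := wit_exists hβ
    simp only [dif_pos hex]
    exact hT _ _ hβ hex.choose_spec
  · intro β hβ β' hβ' heq
    rw [Finset.mem_coe, SimpleGraph.mem_neighborFinset] at hβ hβ'
    have h1 := wit_exists hβ
    have h2 := wit_exists hβ'
    simp only [dif_pos h1, dif_pos h2] at heq
    exact wit_eq h1.choose_spec (heq ▸ h2.choose_spec)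

lemma degree_le (hn : 1 ≤ n) (v : MetallicVertex a n) :
    (metallicCube a n).degree v ≤ 2 * n := by
  have := card_le_gen hn v Finset.univ (fun β p _ _ => Finset.mem_univ p)
  have hcard : (Finset.univ : Finset (Fin n × Bool)).card = 2 * n := by
    simp [Finset.card_univ, mul_comm]
  omega

lemma good_degree (ha : 3 ≤ a) (v : MetallicVertex a n)
    (hv : ∀ i, 0 < (v.1 i : ℕ) ∧ (v.1 i : ℕ) < a - 1) :
    2 * n ≤ (metallicCube a n).degree v := by
  classical
  rw [← SimpleGraph.card_neighborFinset_eq_degree]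
  have hup : ∀ j : Fin n, (v.1 j : ℕ) + 1 < a + 1 := by
    intro j; have := (hv j).2; omega
  have hdown : ∀ j : Fin n, (v.1 j : ℕ) - 1 < a + 1 := by
    intro j; have := (v.1 j).isLt; omega
  set gf : Fin n × Bool → Fin n → Fin (a + 1) := fun p j =>
    if j = p.1 then
      (if p.2 then ⟨(v.1 j : ℕ) + 1, hup j⟩
       else ⟨(v.1 j : ℕ) - 1, hdown j⟩)
    else v.1 j with hgf
  have hgfval : ∀ p j, (gf p j : ℕ) < a := by
    intro p j
    have h1 := (hv j).1
    have h2 := (hv j).2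
    by_cases hj : j = p.1
    · subst hj
      cases hb : p.2 <;> simp [hgf, hb] <;> omega
    · simp [hgf, hj]; omega
  have hok : ∀ p, MetallicOK a n (gf p) := by
    intro p i hi
    exact absurd hi (by have := hgfval p i; omega)
  set G : Fin n × Bool → MetallicVertex a n := fun p => ⟨gf p, hok p⟩ with hGdef
  have hGmem : ∀ p, G p ∈ (metallicCube a n).neighborFinset v := by
    intro p
    rw [SimpleGraph.mem_neighborFinset]
    show (∑ i : Fin n, Nat.dist (v.1 i : ℕ) ((G p).1 i : ℕ)) = 1
    rw [Finset.sum_eq_single p.1]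
    · have h1 := (hv p.1).1
      cases hb : p.2 <;> simp [hGdef, hgf, hb, Nat.dist] <;> omega
    · intro j _ hj
      simp [hGdef, hgf, hj]
    · intro h; exact absurd (Finset.mem_univ _) h
  have hGinj : Function.Injective G := by
    intro p q hpq
    have h1 : ∀ j, ((G p).1 j : ℕ) = ((G q).1 j : ℕ) :=
      fun j => congrArg Fin.val (congrFun (congrArg Subtype.val hpq) j)
    have hii : p.1 = q.1 := by
      by_contra hc
      have e1 := h1 p.1
      have hv1 := (hv p.1).1
      cases hb : p.2 <;>
        simp [hGdef, hgf, hb, hc, Ne.symm hc] at e1 <;> omega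
    have hbb : p.2 = q.2 := by
      have e1 := h1 p.1
      have hv1 := (hv p.1).1
      cases hb : p.2 <;> cases hb' : q.2 <;>
        simp [hGdef, hgf, hii, hb, hb'] at e1 ⊢ <;> omega
    exact Prod.ext hii hbb
  calc 2 * n = (Finset.univ : Finset (Fin n × Bool)).card := by
        simp [Finset.card_univ, mul_comm]
    _ ≤ ((metallicCube a n).neighborFinset v).card :=
        Finset.card_le_card_of_injOn G (fun p _ => hGmem p) hGinj.injOn

lemma bad_degree (ha : 3 ≤ a) (hn : 1 ≤ n) (v : MetallicVertex a n)
    (hbad : ∃ i, (v.1 i : ℕ) = 0 ∨ a - 1 ≤ (v.1 i : ℕ)) :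
    (metallicCube a n).degree v < 2 * n := by
  classical
  suffices h : ∃ x : Fin n × Bool, ∀ β p, (metallicCube a n).Adj v β → Wit v β p → p ≠ x by
    obtain ⟨x, hx⟩ := h
    have hle := card_le_gen hn v (Finset.univ.erase x)
      (fun β p hadj hw => Finset.mem_erase.mpr ⟨hx β p hadj hw, Finset.mem_univ p⟩)
    have hcard : (Finset.univ.erase x).card = 2 * n - 1 := by
      rw [Finset.card_erase_of_mem (Finset.mem_univ x)]
      simp [Finset.card_univ, mul_comm]
    omega
  obtain ⟨i, hi⟩ := hbad
  by_cases hz : ∃ j : Fin n, (v.1 j : ℕ) = 0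
  · obtain ⟨j, hj⟩ := hz
    refine ⟨(j, false), ?_⟩
    intro β p hadj hw heq
    subst heq
    rcases hw.2 with ⟨h1, _⟩ | ⟨_, h2⟩
    · simp at h1
    · simp at h2; omega
  · push_neg at hz
    have hvi : a - 1 ≤ (v.1 i : ℕ) := by
      rcases hi with h | h
      · exact absurd h (hz i)
      · exact h
    refine ⟨(i, true), ?_⟩
    intro β p hadj hw heq
    subst heq
    rcases hw.2 with ⟨_, h2⟩ | ⟨h1, _⟩
    · have hble : (β.1 i : ℕ) < a + 1 := (β.1 i).isLt
      have hba : (β.1 i : ℕ) = a := by simp at h2; omega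
      obtain ⟨j, hj1, hj0⟩ := β.2 i hba
      have hji : j ≠ i := by
        intro h; subst h; omega
      have heqj : β.1 j = v.1 j := hw.1 j (by simpa using hji)
      have : (v.1 j : ℕ) = 0 := by rw [← heqj]; exact hj0
      exact hz j this
    · simp at h1

end MetallicAux

/-- for `a ≥ 3` and `n ≥ 1`, the maximum degree of `Π^a_n` is `2n`;
the vertices of degree `2n` are exactly the strings all of whose letters lie strictly
between `0` and `a−1`, and there are `(a−2)^n` of them. -/
theorem metallic_max_degree (a n : ℕ) (ha : 3 ≤ a) (hn : 1 ≤ n) :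
    (∀ v : MetallicVertex a n, (metallicCube a n).degree v ≤ 2 * n) ∧
    (∀ v : MetallicVertex a n,
      (metallicCube a n).degree v = 2 * n ↔
        ∀ i : Fin n, 0 < (v.1 i : ℕ) ∧ (v.1 i : ℕ) < a - 1) ∧
    (Finset.univ.filter fun v : MetallicVertex a n =>
      (metallicCube a n).degree v = 2 * n).card = (a - 2) ^ n := by
  classical
  have hiff : ∀ v : MetallicVertex a n,
      (metallicCube a n).degree v = 2 * n ↔
        ∀ i : Fin n, 0 < (v.1 i : ℕ) ∧ (v.1 i : ℕ) < a - 1 := by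
    intro v
    constructor
    · intro hd
      by_contra hc
      push_neg at hc
      have hbad : ∃ i, (v.1 i : ℕ) = 0 ∨ a - 1 ≤ (v.1 i : ℕ) := by
        obtain ⟨i, hi⟩ := hc
        refine ⟨i, ?_⟩
        by_cases h0 : (v.1 i : ℕ) = 0
        · exact Or.inl h0
        · exact Or.inr (by have := hi (by omega); omega)
      have := MetallicAux.bad_degree ha hn v hbad
      omega
    · intro hg
      have h1 := MetallicAux.degree_le hn v
      have h2 := MetallicAux.good_degree ha v hg
      omega
  refine ⟨fun v => MetallicAux.degree_le hn v, hiff, ?_⟩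
  rw [Finset.filter_congr (fun v _ => by rw [hiff v])]
  rw [show ((a - 2) ^ n : ℕ) = (Finset.univ : Finset (Fin n → Fin (a - 2))).card by
    simp [Finset.card_univ]]
  refine Finset.card_bij'
    (fun v hv k => (⟨(v.1 k : ℕ) - 1, by
      have h := (Finset.mem_filter.mp hv).2 k; omega⟩ : Fin (a - 2)))
    (fun g hg => (⟨fun k => ⟨(g k : ℕ) + 1, by have := (g k).isLt; omega⟩,
      fun k hk => absurd hk (by have := (g k).isLt; simp; omega)⟩ : MetallicVertex a n))
    ?_ ?_ ?_ ?_
  · intro v hv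
    exact Finset.mem_univ _
  · intro g hg
    refine Finset.mem_filter.mpr ⟨Finset.mem_univ _, fun k => ?_⟩
    have := (g k).isLt
    simp
    omega
  · intro v hv
    apply Subtype.ext
    funext k
    apply Fin.ext
    have h := (Finset.mem_filter.mp hv).2 k
    simp
    omega
  · intro g hg
    funext k
    apply Fin.ext
    simp
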